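/- If a unit-norm beamformer w ∈ ℂ^M has constant beampattern g(arcsin x) = c for all x in the spatial frequency interval [sin Θmin, sin Θmax], then c ≤ 1/(D(sin Θmax − sin Θmin)). -/

import Mathlib

open Complex Real MeasureTheory

lemma exp_orth_integral (D : ℝ) (hD : 0 < D) (k : ℤ) (hk : k ≠ 0) :
    ∫ x in (-(1/(2*D)))..(1/(2*D)),
      Complex.exp (Complex.I * (2*π*D) * k * x) = 0 := by
  have hc : (Complex.I * (2*π*D) * k : ℂ) ≠ 0 := by
    simp [Complex.I_ne_zero, Real.pi_ne_zero, hD.ne', hk]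
  rw [integral_exp_mul_complex hc]
  have hD' : (D : ℂ) ≠ 0 := by exact_mod_cast hD.ne'
  have h1 : (Complex.I * (2*π*D) * k) * ((1/(2*D) : ℝ) : ℂ) = Complex.I * π * k := by
    push_cast; field_simp
  have h2 : (Complex.I * (2*π*D) * k) * ((-(1/(2*D)) : ℝ) : ℂ) = -(Complex.I * π * k) := by
    push_cast; field_simp
  have h3 : Complex.exp (Complex.I * π * k) = Complex.exp (-(Complex.I * π * k)) :=
    Complex.exp_eq_exp_iff_exists_int.mpr ⟨k, by push_cast; ring⟩
  rw [h1, h2, h3, sub_self, zero_div]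

/-- If a unit-norm beamformer has constant beampattern `c` on the spatial frequency
interval `[sin Θmin, sin Θmax]`, then `c ≤ 1/(D (sin Θmax − sin Θmin))`. -/
theorem flat_beampattern_level_le (M : ℕ) (D s₁ s₂ : ℝ) (hD : 0 < D)
    (h₁ : -1 ≤ s₁) (h₁₂ : s₁ < s₂) (h₂ : s₂ ≤ 1)
    (hfreq : 2 * π * D * max |s₁| |s₂| ≤ π)
    (w : Fin M → ℂ) (hw : ∑ m, ‖w m‖ ^ 2 = 1)
    (c : ℝ)
    (hconst : ∀ x ∈ Set.Icc s₁ s₂,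
      ‖∑ m : Fin M, (starRingEnd ℂ) (w m) *
        Complex.exp (-Complex.I * (2 * π * D * x) * m)‖ ^ 2 = c) :
    c ≤ 1 / (D * (s₂ - s₁)) := by
  have hπ := Real.pi_pos
  set L : ℝ := 1/(2*D) with hLdef
  have hL0 : 0 < L := by positivity
  have hmax : max |s₁| |s₂| ≤ L := by
    rw [hLdef, le_div_iff₀ (by positivity)]
    nlinarith [hfreq]
  have hs1L : -L ≤ s₁ := (abs_le.mp ((le_max_left _ _).trans hmax)).1
  have hs2L : s₂ ≤ L := (abs_le.mp ((le_max_right _ _).trans hmax)).2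
  set h : ℝ → ℂ := fun x => ∑ m : Fin M, (starRingEnd ℂ) (w m) *
      Complex.exp (-Complex.I * (2 * π * D * x) * m) with hhdef
  have hcont : Continuous h := by
    apply continuous_finset_sum
    intro m _
    exact continuous_const.mul (Complex.continuous_exp.comp (by fun_prop))
  -- expansion of |h x|^2 as double sum
  have key : ∀ x : ℝ, h x * (starRingEnd ℂ) (h x) =
      ∑ m : Fin M, ∑ n : Fin M, (starRingEnd ℂ) (w m) * w n *
        Complex.exp (Complex.I * (2*π*D) * ((n : ℂ) - (m : ℂ)) * x) := by
    intro x
    rw [hhdef]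
    simp only [map_sum, map_mul, Finset.sum_mul_sum, ← Complex.exp_conj, map_neg,
      Complex.conj_I, Complex.conj_ofReal, Complex.conj_natCast, map_ofNat,
      RingHomCompTriple.comp_apply, RingHom.id_apply]
    refine Finset.sum_congr rfl fun m _ => Finset.sum_congr rfl fun n _ => ?_
    rw [mul_mul_mul_comm, ← Complex.exp_add]
    push_cast
    ring_nf
  have hintegrable : ∀ a b : ℝ,
      IntervalIntegrable (fun x => h x * (starRingEnd ℂ) (h x)) volume a b := by
    intro a b
    exact (hcont.mul (continuous_conj.comp hcont)).intervalIntegrable a b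
  -- total integral over the period
  have hI : ∫ x in (-L)..L, h x * (starRingEnd ℂ) (h x) = ((2*L : ℝ) : ℂ) := by
    simp_rw [key]
    rw [intervalIntegral.integral_finset_sum]
    · have : ∀ m ∈ Finset.univ, (∫ x in (-L)..L, ∑ n : Fin M, (starRingEnd ℂ) (w m) * w n *
          Complex.exp (Complex.I * (2*π*D) * ((n : ℂ) - (m : ℂ)) * x)) =
          (starRingEnd ℂ) (w m) * w m * ((2*L : ℝ) : ℂ) := by
        intro m _
        rw [intervalIntegral.integral_finset_sum]
        · have : ∀ n ∈ Finset.univ, (∫ x in (-L)..L, (starRingEnd ℂ) (w m) * w n *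
              Complex.exp (Complex.I * (2*π*D) * ((n : ℂ) - (m : ℂ)) * x)) =
              if n = m then (starRingEnd ℂ) (w m) * w m * ((2*L : ℝ) : ℂ) else 0 := by
            intro n _
            rw [intervalIntegral.integral_const_mul]
            by_cases hnm : n = m
            · subst hnm
              simp only [sub_self, mul_zero, zero_mul, Complex.exp_zero, if_true]
              rw [intervalIntegral.integral_const, sub_neg_eq_add, Complex.real_smul, mul_one]
              push_cast
              ring
            · have hk : ((n : ℤ) - (m : ℤ)) ≠ 0 := by
                simp only [sub_ne_zero]
                exact_mod_cast fun hh => hnm (Fin.val_injective (by exact_mod_cast hh))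
              have := exp_orth_integral D hD ((n : ℤ) - (m : ℤ)) hk
              have hcast : (((n : ℤ) - (m : ℤ) : ℤ) : ℂ) = (n : ℂ) - (m : ℂ) := by push_cast; rfl
              rw [hcast] at this
              rw [hLdef, this, mul_zero, if_neg hnm]
          rw [Finset.sum_congr rfl this, Finset.sum_ite_eq' Finset.univ m]
          simp
        · intro n _
          apply Continuous.intervalIntegrable
          exact continuous_const.mul (Complex.continuous_exp.comp (by fun_prop))
      rw [Finset.sum_congr rfl this, ← Finset.sum_mul]
      have : ∑ m : Fin M, (starRingEnd ℂ) (w m) * w m = 1 := by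
        have : ∀ m : Fin M, (starRingEnd ℂ) (w m) * w m = ((‖w m‖^2 : ℝ) : ℂ) := by
          intro m
          rw [mul_comm, Complex.mul_conj]
          norm_cast
          rw [Complex.normSq_eq_norm_sq]
        simp_rw [this, ← Complex.ofReal_sum, hw, Complex.ofReal_one]
      rw [this, one_mul]
    · intro m _
      apply Continuous.intervalIntegrable
      apply continuous_finset_sum
      intro n _
      exact continuous_const.mul (Complex.continuous_exp.comp (by fun_prop))
  -- real version
  have hRe : ∀ x : ℝ, ‖h x‖^2 = (h x * (starRingEnd ℂ) (h x)).re := by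
    intro x
    rw [Complex.mul_conj, Complex.ofReal_re, Complex.normSq_eq_norm_sq]
  have hgI : ∫ x in (-L)..L, ‖h x‖^2 = 2*L := by
    simp_rw [hRe]
    have := ContinuousLinearMap.intervalIntegral_comp_comm Complex.reCLM (hintegrable (-L) L)
    simp only [Complex.reCLM_apply] at this
    rw [this, hI, Complex.ofReal_re]
  -- monotonicity
  have hsub : (∫ x in s₁..s₂, ‖h x‖^2) ≤ ∫ x in (-L)..L, ‖h x‖^2 := by
    apply intervalIntegral.integral_mono_interval hs1L h₁₂.le hs2L
    · exact Filter.Eventually.of_forall fun x => by positivity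
    · exact ((hcont.norm.pow 2)).intervalIntegrable _ _
  -- constant value on subinterval
  have hcI : (∫ x in s₁..s₂, ‖h x‖^2) = c * (s₂ - s₁) := by
    rw [intervalIntegral.integral_congr (g := fun _ => c)
      (fun x hx => hconst x (by rwa [Set.uIcc_of_le h₁₂.le] at hx)),
      intervalIntegral.integral_const, smul_eq_mul]
    ring
  have hc0 : 0 ≤ c := by
    rw [← hconst s₁ ⟨le_refl _, h₁₂.le⟩]
    positivity
  have hchain : c * (s₂ - s₁) ≤ 2*L := by rw [← hcI, ← hgI]; exact hsub
  have h2L : 2*L = 1/D := by rw [hLdef]; field_simp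
  rw [le_div_iff₀ (by nlinarith : (0:ℝ) < D * (s₂ - s₁))]
  rw [h2L] at hchain
  have := mul_le_mul_of_nonneg_left hchain hD.le
  rw [mul_one_div, div_self hD.ne'] at this
  nlinarith [this]
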